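/- arXiv:1807.01004 — 2 statements merged into one kernel-verified Lean document; each statement's English description precedes it below -/
import Mathlib

section
/- Characterisation of satisfaction via violating traces: for every closed formula φ ∈ SHML and every system p, the system p satisfies φ (p ∈ ⟦φ⟧) if and only if p has no violating trace with respect to φ, i.e., for every trace t ∈ Act*, ¬(p ⊨v^t φ). -/
set_option autoImplicit false

/-- A labelled transition system over observable actions `Act`;
`none` plays the role of the silent action τ. -/
structure LTS (Act : Type) where
  S : Type
  Tr : S → Option Act → S → Prop

namespace Enf

open scoped Classical

variable {Act : Type}

/-- Zero or more silent steps. -/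
def TauStar (L : LTS Act) : L.S → L.S → Prop :=
  Relation.ReflTransGen (fun p q => L.Tr p none q)

/-- The weak transition `p =a=> q`. -/
def WStep (L : LTS Act) (p : L.S) (a : Act) (q : L.S) : Prop :=
  ∃ p₁ p₂, TauStar L p p₁ ∧ L.Tr p₁ (some a) p₂ ∧ TauStar L p₂ q

/-- Weak trace `p =t=> q`. -/
inductive WTrace (L : LTS Act) : L.S → List Act → L.S → Prop
  | nil {p q : L.S} : TauStar L p q → WTrace L p [] q
  | cons {p r q : L.S} {a : Act} {t : List Act} :
      WStep L p a r → WTrace L r t q → WTrace L p (a :: t) q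

/-- SHML formulas: truth, falsehood, fixpoint variables, finite conjunctions,
modalities `[η]φ` (a guard set of actions together with an action-indexed
continuation, representing the symbolic action and the matching substitutions),
and greatest fixpoints. -/
inductive Frm (Act : Type) : Type where
  | tt : Frm Act
  | ff : Frm Act
  | var : ℕ → Frm Act
  | conj : (n : ℕ) → (Fin n → Frm Act) → Frm Act
  | box : Set Act → (Act → Frm Act) → Frm Act
  | max : ℕ → Frm Act → Frm Act

namespace Frm

/-- Free fixpoint variables. -/
def fv : Frm Act → Set ℕ
  | .tt => ∅
  | .ff => ∅
  | .var X => {X}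
  | .conj _ f => ⋃ i, fv (f i)
  | .box G k => ⋃ a ∈ G, fv (k a)
  | .max X φ => fv φ \ {X}

def Closed (φ : Frm Act) : Prop := fv φ = ∅

/-- Substitution `φ[ψ/X]` (of a closed formula `ψ`). -/
def subst : Frm Act → ℕ → Frm Act → Frm Act
  | .tt, _, _ => .tt
  | .ff, _, _ => .ff
  | .var Y, X, ψ => if Y = X then ψ else .var Y
  | .conj n f, X, ψ => .conj n (fun i => subst (f i) X ψ)
  | .box G k, X, ψ => .box G (fun a => subst (k a) X ψ)
  | .max Y φ, X, ψ => if Y = X then .max Y φ else .max Y (subst φ X ψ)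

/-- The normal-form fragment SHMLnf: conjunctions are conjunctions of
modalities with pairwise-disjoint guards, and each greatest fixpoint binds a
variable occurring free in its body. -/
inductive IsNF : Frm Act → Prop
  | tt : IsNF .tt
  | ff : IsNF .ff
  | var (X : ℕ) : IsNF (.var X)
  | conj (n : ℕ) (G : Fin n → Set Act) (k : Fin n → Act → Frm Act)
      (hdisj : ∀ i j : Fin n, i ≠ j → ∀ a : Act, a ∈ G i → a ∉ G j)
      (hk : ∀ i : Fin n, ∀ a ∈ G i, IsNF (k i a)) :
      IsNF (.conj n fun i => .box (G i) (k i))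
  | max (X : ℕ) (φ : Frm Act) (hfree : X ∈ fv φ) (hφ : IsNF φ) : IsNF (.max X φ)

/-- `gvar X φ`: the variable `X` does not occur unguarded (i.e. outside every
modality) in `φ`. -/
def gvar (X : ℕ) : Frm Act → Prop
  | .tt => True
  | .ff => True
  | .var Y => Y ≠ X
  | .conj _ f => ∀ i, gvar X (f i)
  | .box _ _ => True
  | .max Y φ => Y = X ∨ gvar X φ

/-- A formula is guarded if every occurrence of a fixpoint variable lies
beneath a modality. -/
def Guarded : Frm Act → Prop
  | .tt => True
  | .ff => True
  | .var _ => True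
  | .conj _ f => ∀ i, Guarded (f i)
  | .box G k => ∀ a ∈ G, Guarded (k a)
  | .max X φ => gvar X φ ∧ Guarded φ

/-- Number of top-level greatest-fixpoint binders. -/
def topMax : Frm Act → ℕ
  | .max _ φ => topMax φ + 1
  | _ => 0

end Frm

/-- Denotational semantics of (possibly open) formulas, relative to an
environment mapping fixpoint variables to sets of states; `max` is interpreted
as the greatest fixpoint of the induced monotone map. -/
def sem (L : LTS Act) : Frm Act → (ℕ → Set L.S) → Set L.S
  | .tt, _ => Set.univ
  | .ff, _ => ∅
  | .var X, ρ => ρ X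
  | .conj _ f, ρ => ⋂ i, sem L (f i) ρ
  | .box G k, ρ => {p | ∀ a ∈ G, ∀ q, WStep L p a q → q ∈ sem L (k a) ρ}
  | .max X φ, ρ => ⋃₀ {S | S ⊆ sem L φ (Function.update ρ X S)}

/-- Semantics of closed formulas. -/
def Sem (L : LTS Act) (φ : Frm Act) : Set L.S := sem L φ fun _ => ∅

/-- Satisfiability. -/
def SatIn (L : LTS Act) (φ : Frm Act) : Prop := (Sem L φ).Nonempty

/-- The violation relation `p ⊨v^t φ`, defined as the least relation closed
under the given rules. -/
inductive Viol (L : LTS Act) : L.S → List Act → Frm Act → Prop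
  | ff (p : L.S) : Viol L p [] .ff
  | conj {p : L.S} {t : List Act} {n : ℕ} {f : Fin n → Frm Act} (j : Fin n) :
      Viol L p t (f j) → Viol L p t (.conj n f)
  | box {p p' : L.S} {t : List Act} {a : Act} {G : Set Act} {k : Act → Frm Act} :
      a ∈ G → WStep L p a p' → Viol L p' t (k a) → Viol L p (a :: t) (.box G k)
  | max {p : L.S} {t : List Act} {X : ℕ} {φ : Frm Act} :
      Viol L p t (Frm.subst φ X (.max X φ)) → Viol L p t (.max X φ)

/-- Transducers (enforcement monitors): identity, symbolic transformation
prefixes (a guard set of extended input actions, with `none` standing for the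
insertion pattern •, an output per matched input, with `none` standing for τ,
and a continuation per matched input), finite selections, recursion, and
recursion variables. -/
inductive Trn (Act : Type) : Type where
  | id : Trn Act
  | prf : Set (Option Act) → (Option Act → Option Act) → (Option Act → Trn Act) → Trn Act
  | sel : (n : ℕ) → (Fin n → Trn Act) → Trn Act
  | fix : ℕ → Trn Act → Trn Act
  | var : ℕ → Trn Act

namespace Trn

def tsubst : Trn Act → ℕ → Trn Act → Trn Act
  | .id, _, _ => .id
  | .prf G out k, x, s => .prf G out fun γ => tsubst (k γ) x s
  | .sel n f, x, s => .sel n fun i => tsubst (f i) x s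
  | .fix y e, x, s => if y = x then .fix y e else .fix y (tsubst e x s)
  | .var y, x, s => if y = x then s else .var y

end Trn

/-- Transducer transitions: labels are pairs (input, output) where input
`none` is the insertion pattern • and output `none` is τ. -/
inductive TStep : Trn Act → Option Act × Option Act → Trn Act → Prop
  | id (a : Act) : TStep .id (some a, some a) .id
  | prf {G : Set (Option Act)} {out : Option Act → Option Act}
      {k : Option Act → Trn Act} {γ : Option Act} (h : γ ∈ G) :
      TStep (.prf G out k) (γ, out γ) (k γ)
  | sel {n : ℕ} {f : Fin n → Trn Act} {l : Option Act × Option Act}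
      {e' : Trn Act} (i : Fin n) (h : TStep (f i) l e') :
      TStep (.sel n f) l e'
  | fix {x : ℕ} {e : Trn Act} {l : Option Act × Option Act} {e' : Trn Act}
      (h : TStep (Trn.tsubst e x (.fix x e)) l e') :
      TStep (.fix x e) l e'

/-- Instrumentation of a transducer on a system. -/
inductive IStep (L : LTS Act) : Trn Act × L.S → Option Act → Trn Act × L.S → Prop
  | trn {e e' : Trn Act} {p p' : L.S} {a : Act} {μ : Option Act} :
      L.Tr p (some a) p' → TStep e (some a, μ) e' → IStep L (e, p) μ (e', p')
  | asy {e : Trn Act} {p p' : L.S} :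
      L.Tr p none p' → IStep L (e, p) none (e, p')
  | ins {e e' : Trn Act} {p : L.S} {μ : Option Act} :
      TStep e (none, μ) e' → IStep L (e, p) μ (e', p)
  | ter {e : Trn Act} {p p' : L.S} {a : Act} :
      L.Tr p (some a) p' →
      (∀ μ e', ¬ TStep e (some a, μ) e') →
      (∀ μ e', ¬ TStep e (none, μ) e') →
      IStep L (e, p) (some a) (Trn.id, p')

/-- The LTS of monitored systems `e[p]`. -/
def instLTS (L : LTS Act) : LTS Act := ⟨Trn Act × L.S, IStep L⟩

/-- Strong bisimulations between (the state spaces of) two LTSs. -/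
def IsBisim (L₁ L₂ : LTS Act) (R : L₁.S → L₂.S → Prop) : Prop :=
  ∀ s r, R s r →
    (∀ μ s', L₁.Tr s μ s' → ∃ r', L₂.Tr r μ r' ∧ R s' r') ∧
    (∀ μ r', L₂.Tr r μ r' → ∃ s', L₁.Tr s μ s' ∧ R s' r')

/-- Strong bisimilarity. -/
def Bisim (L₁ L₂ : LTS Act) (s : L₁.S) (r : L₂.S) : Prop :=
  ∃ R, IsBisim L₁ L₂ R ∧ R s r

/-- The synthesis function `⟦-⟧e` from SHMLnf formulas to transducers:
formula variable `X` becomes monitor variable `X+1`; `tt` and `ff` become the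
identity monitor; `max X.φ` becomes the corresponding recursive monitor; and a
normalised conjunction of modalities becomes a recursive selection (on the
fresh variable `0`) of symbolic prefixes that suppress (output τ, continue as
the recursion variable) actions whose continuation formula is `ff` and pass
through all other matched actions, continuing with the synthesis of the
respective continuation formula. -/
noncomputable def synth : Frm Act → Trn Act
  | .tt => .id
  | .ff => .id
  | .var X => .var (X + 1)
  | .max X φ => .fix (X + 1) (synth φ)
  | .box G k =>
      .prf {γ | ∃ a ∈ G, γ = some a}
        (fun γ =>
          match γ with
          | some a => if k a = Frm.ff then none else some a
          | none => none)
        (fun γ =>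
          match γ with
          | some a => if k a = Frm.ff then Trn.var 0 else synth (k a)
          | none => .id)
  | .conj n f => .fix 0 (.sel n fun i => synth (f i))

/-- Fuelled residual function (the fuel is consumed by fixpoint unfoldings;
on guarded closed SHMLnf formulas `topMax φ + 1` units of fuel suffice). -/
noncomputable def afterFuel : ℕ → Frm Act → Act → Frm Act
  | 0, _, _ => .tt
  | n + 1, φ, a =>
    match φ with
    | .max X ψ => afterFuel n (Frm.subst ψ X (.max X ψ)) a
    | .conj m f =>
        if h : ∃ i : Fin m, ∃ G : Set Act, ∃ k : Act → Frm Act,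
            f i = Frm.box G k ∧ a ∈ G
        then h.choose_spec.choose_spec.choose a
        else .tt
    | ψ => ψ

/-- The residual `after(φ, a)` of a guarded closed SHMLnf formula. -/
noncomputable def after (φ : Frm Act) (a : Act) : Frm Act :=
  afterFuel (Frm.topMax φ + 1) φ a

/-- Satisfaction relations (the coinductive rules of `⊨s`). -/
def IsSatRel (L : LTS Act) (R : L.S → Frm Act → Prop) : Prop :=
  (∀ p, ¬ R p .ff) ∧
  (∀ p (n : ℕ) (f : Fin n → Frm Act), R p (.conj n f) → ∀ i, R p (f i)) ∧
  (∀ p (G : Set Act) (k : Act → Frm Act), R p (.box G k) →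
      ∀ a ∈ G, ∀ q, WStep L p a q → R q (k a)) ∧
  (∀ p (X : ℕ) (φ : Frm Act), R p (.max X φ) → R p (Frm.subst φ X (.max X φ)))

/-- The largest satisfaction relation `⊨s`. -/
def SatCo (L : LTS Act) (p : L.S) (φ : Frm Act) : Prop :=
  ∃ R, IsSatRel L R ∧ R p φ


/-! ### Auxiliary development -/

section Aux

variable (L : LTS Act)

/-- Semantics only depends on the environment at free variables. -/
lemma sem_congr : ∀ (φ : Frm Act) (ρ ρ' : ℕ → Set L.S),
    (∀ X ∈ Frm.fv φ, ρ X = ρ' X) → sem L φ ρ = sem L φ ρ' := by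
  intro φ
  induction φ with
  | tt => intro ρ ρ' _; rfl
  | ff => intro ρ ρ' _; rfl
  | var X => intro ρ ρ' h; exact h X (by simp [Frm.fv])
  | conj n f ih =>
    intro ρ ρ' h
    simp only [sem]
    exact Set.iInter_congr fun i =>
      ih i ρ ρ' fun X hX => h X (by simp [Frm.fv]; exact ⟨i, hX⟩)
  | box G k ih =>
    intro ρ ρ' h
    simp only [sem]
    ext p
    simp only [Set.mem_setOf_eq]
    constructor
    · intro hp a ha q hw
      rw [← ih a ρ ρ' fun X hX => h X (by simp [Frm.fv]; exact ⟨a, ha, hX⟩)]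
      exact hp a ha q hw
    · intro hp a ha q hw
      rw [ih a ρ ρ' fun X hX => h X (by simp [Frm.fv]; exact ⟨a, ha, hX⟩)]
      exact hp a ha q hw
  | max X φ ih =>
    intro ρ ρ' h
    simp only [sem]
    refine congrArg Set.sUnion ?_
    ext S
    simp only [Set.mem_setOf_eq]
    rw [ih (Function.update ρ X S) (Function.update ρ' X S) ?_]
    intro Y hY
    by_cases hYX : Y = X
    · subst hYX; simp
    · simp [Function.update_of_ne hYX]
      exact h Y (by simp [Frm.fv]; exact ⟨hY, hYX⟩)

/-- Monotonicity of the semantics in the environment. -/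
lemma sem_mono : ∀ (φ : Frm Act) (ρ ρ' : ℕ → Set L.S),
    (∀ X, ρ X ⊆ ρ' X) → sem L φ ρ ⊆ sem L φ ρ' := by
  intro φ
  induction φ with
  | tt => intro ρ ρ' _; exact le_refl _
  | ff => intro ρ ρ' _; exact le_refl _
  | var X => intro ρ ρ' h; exact h X
  | conj n f ih =>
    intro ρ ρ' h p hp
    simp only [sem, Set.mem_iInter] at hp ⊢
    exact fun i => ih i ρ ρ' h (hp i)
  | box G k ih =>
    intro ρ ρ' h p hp
    simp only [sem, Set.mem_setOf_eq] at hp ⊢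
    exact fun a ha q hw => ih a ρ ρ' h (hp a ha q hw)
  | max X φ ih =>
    intro ρ ρ' h p hp
    simp only [sem, Set.mem_sUnion, Set.mem_setOf_eq] at hp ⊢
    obtain ⟨S, hS, hpS⟩ := hp
    refine ⟨S, ?_, hpS⟩
    refine hS.trans (ih _ _ ?_)
    intro Y
    by_cases hYX : Y = X
    · subst hYX; simp
    · simp [Function.update_of_ne hYX]; exact h Y

lemma fv_subst : ∀ (φ : Frm Act) (X : ℕ) (ψ : Frm Act),
    Frm.fv (Frm.subst φ X ψ) ⊆ (Frm.fv φ \ {X}) ∪ Frm.fv ψ := by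
  intro φ
  induction φ with
  | tt => intro X ψ; simp [Frm.subst, Frm.fv]
  | ff => intro X ψ; simp [Frm.subst, Frm.fv]
  | var Y =>
    intro X ψ
    by_cases h : Y = X
    · simp [Frm.subst, h, Frm.fv]
    · simp only [Frm.subst, if_neg h, Frm.fv]
      intro Z hZ
      simp at hZ; subst hZ
      exact Or.inl (by simp [h])
  | conj n f ih =>
    intro X ψ
    simp only [Frm.subst, Frm.fv]
    intro Z hZ
    simp only [Set.mem_iUnion] at hZ
    obtain ⟨i, hi⟩ := hZ
    rcases ih i X ψ hi with h | h
    · exact Or.inl ⟨Set.mem_iUnion.mpr ⟨i, h.1⟩, h.2⟩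
    · exact Or.inr h
  | box G k ih =>
    intro X ψ
    simp only [Frm.subst, Frm.fv]
    intro Z hZ
    simp only [Set.mem_iUnion] at hZ
    obtain ⟨a, ha, hi⟩ := hZ
    rcases ih a X ψ hi with h | h
    · exact Or.inl ⟨by simp only [Set.mem_iUnion]; exact ⟨a, ha, h.1⟩, h.2⟩
    · exact Or.inr h
  | max Y φ ih =>
    intro X ψ
    by_cases h : Y = X
    · subst h
      simp only [Frm.subst, if_pos rfl, if_true]
      intro Z hZ
      simp only [Frm.fv, Set.mem_diff, Set.mem_singleton_iff] at hZ
      exact Or.inl ⟨hZ, hZ.2⟩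
    · simp only [Frm.subst, if_neg h, Frm.fv]
      intro Z hZ
      simp only [Set.mem_diff, Set.mem_singleton_iff] at hZ
      obtain ⟨hZ1, hZ2⟩ := hZ
      rcases ih X ψ hZ1 with hh | hh
      · exact Or.inl ⟨⟨hh.1, hZ2⟩, hh.2⟩
      · exact Or.inr hh

/-- Substitution lemma. -/
lemma subst_sem : ∀ (φ : Frm Act) (X : ℕ) (ψ : Frm Act), ψ.Closed →
    ∀ ρ : ℕ → Set L.S,
    sem L (Frm.subst φ X ψ) ρ = sem L φ (Function.update ρ X (Sem L ψ)) := by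
  intro φ
  induction φ with
  | tt => intros; rfl
  | ff => intros; rfl
  | var Y =>
    intro X ψ hψ ρ
    by_cases h : Y = X
    · subst h
      simp only [Frm.subst, if_pos rfl, if_true, sem, Function.update_self]
      exact sem_congr L ψ ρ (fun _ => ∅) (by simp [Frm.Closed.eq_1] at hψ; simp [hψ])
    · simp [Frm.subst, if_neg h, sem, Function.update_of_ne h]
  | conj n f ih =>
    intro X ψ hψ ρ
    simp only [Frm.subst, sem]
    exact Set.iInter_congr fun i => ih i X ψ hψ ρ
  | box G k ih =>
    intro X ψ hψ ρ
    simp only [Frm.subst, sem]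
    ext p
    simp only [Set.mem_setOf_eq]
    constructor
    · intro hp a ha q hw; rw [← ih a X ψ hψ ρ]; exact hp a ha q hw
    · intro hp a ha q hw; rw [ih a X ψ hψ ρ]; exact hp a ha q hw
  | max Y φ ih =>
    intro X ψ hψ ρ
    by_cases h : Y = X
    · subst h
      simp only [Frm.subst, if_pos rfl, if_true]
      refine sem_congr L _ ρ _ ?_
      intro Z hZ
      simp only [Frm.fv, Set.mem_diff, Set.mem_singleton_iff] at hZ
      rw [Function.update_of_ne hZ.2]
    · simp only [Frm.subst, if_neg h, sem]
      refine congrArg Set.sUnion ?_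
      ext S
      simp only [Set.mem_setOf_eq]
      rw [ih X ψ hψ (Function.update ρ Y S),
        Function.update_comm (fun hXY => h hXY.symm)]

lemma viol_not_sem {p : L.S} {t : List Act} {φ : Frm Act}
    (h : Viol L p t φ) : φ.Closed → p ∉ Sem L φ := by
  induction h with
  | ff p => intro _ hp; simp [Sem, sem] at hp
  | conj j hv ih =>
    intro hc hp
    refine ih ?_ ?_
    · have := hc
      simp only [Frm.Closed, Frm.fv, Set.iUnion_eq_empty] at this
      exact this j
    · simp only [Sem, sem, Set.mem_iInter] at hp
      exact hp j
  | box ha hw hv ih =>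
    rename_i p p' t a G k
    intro hc hp
    refine ih ?_ ?_
    · have := hc
      simp only [Frm.Closed, Frm.fv, Set.iUnion_eq_empty] at this
      exact this a ha
    · simp only [Sem, sem, Set.mem_setOf_eq] at hp
      exact hp a ha p' hw
  | max hv ih =>
    rename_i p t X φ
    intro hc hp
    have hcl : (Frm.subst φ X (Frm.max X φ)).Closed := by
      have := fv_subst φ X (Frm.max X φ)
      simp only [Frm.Closed] at hc ⊢
      apply Set.eq_empty_of_subset_empty
      refine this.trans ?_
      simp only [Frm.fv] at hc ⊢
      rw [hc]
      simp
    refine ih hcl ?_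
    simp only [Sem, sem, Set.mem_sUnion, Set.mem_setOf_eq] at hp
    obtain ⟨S, hS, hpS⟩ := hp
    have hSgfp : S ⊆ Sem L (Frm.max X φ) := by
      simp only [Sem, sem]
      exact Set.subset_sUnion_of_mem hS
    have : p ∈ sem L φ (Function.update (fun _ => (∅ : Set L.S)) X
        (Sem L (Frm.max X φ))) := by
      refine sem_mono L φ _ _ ?_ (hS hpS)
      intro Y
      by_cases hYX : Y = X
      · subst hYX; simpa using hSgfp
      · simp [Function.update_of_ne hYX]
    rw [Sem, subst_sem L φ X (Frm.max X φ) hc]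
    exact this

/-- Simultaneous substitution of formulas for all variables. -/
def msubst : Frm Act → (ℕ → Frm Act) → Frm Act
  | .tt, _ => .tt
  | .ff, _ => .ff
  | .var X, σ => σ X
  | .conj n f, σ => .conj n fun i => msubst (f i) σ
  | .box G k, σ => .box G fun a => msubst (k a) σ
  | .max X φ, σ => .max X (msubst φ (Function.update σ X (.var X)))

/-- Equivalence of formulas up to continuations outside guards. -/
inductive FEquiv : Frm Act → Frm Act → Prop
  | tt : FEquiv .tt .tt
  | ff : FEquiv .ff .ff
  | var (X : ℕ) : FEquiv (.var X) (.var X)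
  | conj {n : ℕ} {f g : Fin n → Frm Act} :
      (∀ i, FEquiv (f i) (g i)) → FEquiv (.conj n f) (.conj n g)
  | box {G : Set Act} {k k' : Act → Frm Act} :
      (∀ a ∈ G, FEquiv (k a) (k' a)) → FEquiv (.box G k) (.box G k')
  | max {X : ℕ} {φ φ' : Frm Act} : FEquiv φ φ' → FEquiv (.max X φ) (.max X φ')

lemma FEquiv.refl : ∀ φ : Frm Act, FEquiv φ φ := by
  intro φ
  induction φ with
  | tt => exact .tt
  | ff => exact .ff
  | var X => exact .var X
  | conj n f ih => exact .conj fun i => ih i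
  | box G k ih => exact .box fun a _ => ih a
  | max X φ ih => exact .max ih

lemma FEquiv.symm : ∀ {φ φ' : Frm Act}, FEquiv φ φ' → FEquiv φ' φ := by
  intro φ φ' h
  induction h with
  | tt => exact .tt
  | ff => exact .ff
  | var X => exact .var X
  | conj _ ih => exact .conj ih
  | box _ ih => exact .box ih
  | max _ ih => exact .max ih

lemma subst_fequiv (X : ℕ) {ψ ψ' : Frm Act} (hψ : FEquiv ψ ψ') :
    ∀ {φ φ' : Frm Act}, FEquiv φ φ' →
    FEquiv (Frm.subst φ X ψ) (Frm.subst φ' X ψ') := by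
  intro φ φ' h
  induction h with
  | tt => exact .tt
  | ff => exact .ff
  | var Y =>
    by_cases hY : Y = X
    · simpa [Frm.subst, hY] using hψ
    · simpa [Frm.subst, hY] using FEquiv.var Y
  | conj _ ih => exact .conj fun i => ih i
  | box _ ih => exact .box fun a ha => ih a ha
  | max h0 ih =>
    rename_i Y φ1 φ2
    by_cases hY : Y = X
    · simp only [Frm.subst, if_pos hY]
      exact FEquiv.max h0
    · simp only [Frm.subst, if_neg hY]
      exact FEquiv.max ih

/-- The violation relation is preserved by `FEquiv`. -/
lemma viol_equiv : ∀ {p : L.S} {t : List Act} {φ : Frm Act}, Viol L p t φ →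
    ∀ φ' : Frm Act, FEquiv φ φ' → Viol L p t φ' := by
  intro p t φ h
  induction h with
  | ff p => intro φ' he; cases he; exact Viol.ff p
  | conj j hv ih =>
    intro φ' he
    cases he with
    | conj hfg => exact Viol.conj j (ih _ (hfg j))
  | box ha hw hv ih =>
    intro φ' he
    cases he with
    | box hk => exact Viol.box ha hw (ih _ (hk _ ha))
  | max hv ih =>
    intro φ' he
    cases he with
    | max h0 => exact Viol.max (ih _ (subst_fequiv _ (FEquiv.max h0) h0))

lemma subst_not_free : ∀ (φ : Frm Act) (X : ℕ) (ψ : Frm Act),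
    X ∉ Frm.fv φ → FEquiv (Frm.subst φ X ψ) φ := by
  intro φ
  induction φ with
  | tt => intros; exact .tt
  | ff => intros; exact .ff
  | var Y =>
    intro X ψ h
    simp only [Frm.fv, Set.mem_singleton_iff] at h
    have hYX : Y ≠ X := fun hh => h hh.symm
    simp only [Frm.subst, if_neg hYX]
    exact FEquiv.var Y
  | conj n f ih =>
    intro X ψ h
    simp only [Frm.fv, Set.mem_iUnion] at h
    push_neg at h
    exact .conj fun i => ih i X ψ (h i)
  | box G k ih =>
    intro X ψ h
    simp only [Frm.fv, Set.mem_iUnion] at h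
    push_neg at h
    exact .box fun a ha => ih a X ψ (h a ha)
  | max Y φ ih =>
    intro X ψ h
    by_cases hYX : Y = X
    · simp only [Frm.subst, if_pos hYX]
      exact FEquiv.refl (Frm.max Y φ)
    · simp only [Frm.fv, Set.mem_diff, Set.mem_singleton_iff] at h
      push_neg at h
      simp only [Frm.subst, if_neg hYX]
      exact .max (ih X ψ (fun hX => hYX ((h hX).symm)))

lemma msubst_subst : ∀ (φ : Frm Act) (σ : ℕ → Frm Act) (X : ℕ) (ψ : Frm Act),
    σ X = .var X → (∀ Y ∈ Frm.fv φ, Y ≠ X → X ∉ Frm.fv (σ Y)) →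
    FEquiv (Frm.subst (msubst φ σ) X ψ) (msubst φ (Function.update σ X ψ)) := by
  intro φ
  induction φ with
  | tt => intros; exact .tt
  | ff => intros; exact .ff
  | var Z =>
    intro σ X ψ hσX h
    by_cases hZ : Z = X
    · subst hZ
      simpa [msubst, hσX, Frm.subst] using FEquiv.refl ψ
    · simp only [msubst, Function.update_of_ne hZ]
      exact subst_not_free (σ Z) X ψ (h Z (by simp [Frm.fv]) hZ)
  | conj n f ih =>
    intro σ X ψ hσX h
    exact .conj fun i => ih i σ X ψ hσX fun Y hY =>
      h Y (by simp [Frm.fv]; exact ⟨i, hY⟩)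
  | box G k ih =>
    intro σ X ψ hσX h
    exact .box fun a ha => ih a σ X ψ hσX fun Y hY =>
      h Y (by simp [Frm.fv]; exact ⟨a, ha, hY⟩)
  | max Y φ ih =>
    intro σ X ψ hσX h
    by_cases hYX : Y = X
    · subst hYX
      simpa [msubst, Frm.subst, Function.update_idem] using
        FEquiv.refl (Frm.max Y (msubst φ (Function.update σ Y (Frm.var Y))))
    · simp only [msubst, Frm.subst, if_neg hYX]
      rw [Function.update_comm (fun hXY : X = Y => hYX hXY.symm)]
      refine .max (ih (Function.update σ Y (.var Y)) X ψ
        (by rw [Function.update_of_ne (fun hXY : X = Y => hYX hXY.symm)]; exact hσX) ?_)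
      intro Z hZ hZX
      by_cases hZY : Z = Y
      · subst hZY
        simp only [Function.update_self, Frm.fv, Set.mem_singleton_iff]
        exact fun hh => hYX hh.symm
      · rw [Function.update_of_ne hZY]
        exact h Z (by simp [Frm.fv]; exact ⟨hZ, hZY⟩) hZX

lemma msubst_congr : ∀ (φ : Frm Act) (σ σ' : ℕ → Frm Act),
    (∀ Y ∈ Frm.fv φ, σ Y = σ' Y) → FEquiv (msubst φ σ) (msubst φ σ') := by
  intro φ
  induction φ with
  | tt => intros; exact .tt
  | ff => intros; exact .ff
  | var X =>
    intro σ σ' h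
    rw [show msubst (Frm.var X) σ = σ X from rfl, h X (by simp [Frm.fv])]
    exact FEquiv.refl _
  | conj n f ih =>
    intro σ σ' h
    exact .conj fun i => ih i σ σ' fun Y hY => h Y (by simp [Frm.fv]; exact ⟨i, hY⟩)
  | box G k ih =>
    intro σ σ' h
    exact .box fun a ha => ih a σ σ' fun Y hY =>
      h Y (by simp [Frm.fv]; exact ⟨a, ha, hY⟩)
  | max X φ ih =>
    intro σ σ' h
    refine .max (ih _ _ ?_)
    intro Y hY
    by_cases hYX : Y = X
    · subst hYX; simp
    · rw [Function.update_of_ne hYX, Function.update_of_ne hYX]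
      exact h Y (by simp [Frm.fv]; exact ⟨hY, hYX⟩)

lemma msubst_id : ∀ φ : Frm Act, msubst φ (fun Y => .var Y) = φ := by
  intro φ
  induction φ with
  | tt => rfl
  | ff => rfl
  | var X => rfl
  | conj n f ih => simp only [msubst]; congr 1; funext i; exact ih i
  | box G k ih => simp only [msubst]; congr 1; funext a; exact ih a
  | max X φ ih =>
    simp only [msubst]
    congr 1
    rw [show Function.update (fun Y => (Frm.var Y : Frm Act)) X (.var X) =
      fun Y => .var Y from Function.update_eq_self X _]
    exact ih

lemma msubst_closed (φ : Frm Act) (hc : φ.Closed) (σ : ℕ → Frm Act) :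
    FEquiv (msubst φ σ) φ := by
  have := msubst_congr φ σ (fun Y => .var Y) ?_
  · rwa [msubst_id] at this
  · intro Y hY
    simp only [Frm.Closed] at hc
    rw [hc] at hY
    exact absurd hY (Set.notMem_empty Y)

lemma fv_msubst : ∀ (φ : Frm Act) (σ : ℕ → Frm Act),
    Frm.fv (msubst φ σ) ⊆ ⋃ Y ∈ Frm.fv φ, Frm.fv (σ Y) := by
  intro φ
  induction φ with
  | tt => intro σ; simp [msubst, Frm.fv]
  | ff => intro σ; simp [msubst, Frm.fv]
  | var X => intro σ; simp [msubst, Frm.fv]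
  | conj n f ih =>
    intro σ Z hZ
    simp only [msubst, Frm.fv, Set.mem_iUnion] at hZ
    obtain ⟨i, hi⟩ := hZ
    have := ih i σ hi
    simp only [Set.mem_iUnion] at this ⊢
    obtain ⟨Y, hY1, hY2⟩ := this
    refine ⟨Y, ?_, hY2⟩
    simp only [Frm.fv, Set.mem_iUnion]
    exact ⟨i, hY1⟩
  | box G k ih =>
    intro σ Z hZ
    simp only [msubst, Frm.fv, Set.mem_iUnion] at hZ
    obtain ⟨a, ha, hi⟩ := hZ
    have := ih a σ hi
    simp only [Set.mem_iUnion] at this ⊢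
    obtain ⟨Y, hY1, hY2⟩ := this
    refine ⟨Y, ?_, hY2⟩
    simp only [Frm.fv, Set.mem_iUnion]
    exact ⟨a, ha, hY1⟩
  | max X φ ih =>
    intro σ Z hZ
    simp only [msubst, Frm.fv, Set.mem_diff, Set.mem_singleton_iff] at hZ
    obtain ⟨hZ1, hZ2⟩ := hZ
    have := ih (Function.update σ X (.var X)) hZ1
    simp only [Set.mem_iUnion] at this ⊢
    obtain ⟨Y, hY1, hY2⟩ := this
    by_cases hYX : Y = X
    · subst hYX
      simp only [Function.update_self, Frm.fv, Set.mem_singleton_iff] at hY2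
      exact absurd hY2 hZ2
    · rw [Function.update_of_ne hYX] at hY2
      refine ⟨Y, ?_, hY2⟩
      simp only [Frm.fv, Set.mem_diff, Set.mem_singleton_iff]
      exact ⟨hY1, hYX⟩

/-- Key lemma: no violating trace implies satisfaction (for open formulas,
relative to simultaneous closed substitutions). -/
lemma no_viol_sem : ∀ (φ : Frm Act) (σ : ℕ → Frm Act),
    (∀ Y ∈ Frm.fv φ, (σ Y).Closed) →
    ∀ p : L.S, (∀ t, ¬ Viol L p t (msubst φ σ)) →
    p ∈ sem L φ (fun Y => {q | ∀ t, ¬ Viol L q t (σ Y)}) := by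
  intro φ
  induction φ with
  | tt => intro σ _ p _; simp [sem]
  | ff => intro σ _ p hNV; exact absurd (Viol.ff p) (hNV [])
  | var X => intro σ _ p hNV; exact hNV
  | conj n f ih =>
    intro σ hc p hNV
    simp only [sem, Set.mem_iInter]
    intro i
    refine ih i σ (fun Y hY => hc Y (by simp [Frm.fv]; exact ⟨i, hY⟩)) p ?_
    intro t hv
    exact hNV t (Viol.conj i hv)
  | box G k ih =>
    intro σ hc p hNV
    simp only [sem, Set.mem_setOf_eq]
    intro a ha q hw
    refine ih a σ (fun Y hY => hc Y (by simp [Frm.fv]; exact ⟨a, ha, hY⟩)) q ?_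
    intro t hv
    exact hNV (a :: t) (Viol.box ha hw hv)
  | max X φ ih =>
    intro σ hc p hNV
    set Φ : Frm Act := msubst (.max X φ) σ with hΦ
    have hΦc : Φ.Closed := by
      simp only [Frm.Closed]
      apply Set.eq_empty_of_subset_empty
      refine (fv_msubst (.max X φ) σ).trans ?_
      intro Z hZ
      simp only [Set.mem_iUnion] at hZ
      obtain ⟨Y, hY, hZY⟩ := hZ
      have := hc Y hY
      simp only [Frm.Closed] at this
      rw [this] at hZY
      exact hZY
    simp only [sem, Set.mem_sUnion, Set.mem_setOf_eq]
    refine ⟨{q | ∀ t, ¬ Viol L q t Φ}, ?_, hNV⟩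
    intro q hq
    have hNV' : ∀ t, ¬ Viol L q t (msubst φ (Function.update σ X Φ)) := by
      intro t hv
      have heq : FEquiv (Frm.subst (msubst φ (Function.update σ X (.var X))) X Φ)
          (msubst φ (Function.update σ X Φ)) := by
        have h1 := msubst_subst φ (Function.update σ X (.var X)) X Φ (by simp) ?_
        · rwa [Function.update_idem] at h1
        · intro Y hY hYX hmem
          rw [Function.update_of_ne hYX] at hmem
          have := hc Y (by simp [Frm.fv]; exact ⟨hY, hYX⟩)
          simp only [Frm.Closed] at this
          rw [this] at hmem
          exact hmem
      have hv' := viol_equiv L hv _ heq.symm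
      exact hq t (Viol.max hv')
    have := ih (Function.update σ X Φ) ?_ q hNV'
    · have henv : (fun Y => {q : L.S | ∀ t, ¬ Viol L q t (Function.update σ X Φ Y)}) =
          Function.update (fun Y => {q : L.S | ∀ t, ¬ Viol L q t (σ Y)}) X
            {q | ∀ t, ¬ Viol L q t Φ} := by
        funext Y
        by_cases hYX : Y = X
        · subst hYX; simp
        · rw [Function.update_of_ne hYX, Function.update_of_ne hYX]
      rwa [henv] at this
    · intro Y hY
      by_cases hYX : Y = X
      · subst hYX; simpa using hΦc
      · rw [Function.update_of_ne hYX]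
        exact hc Y (by simp [Frm.fv]; exact ⟨hY, hYX⟩)

end Aux

/-- characterisation of satisfaction via violating traces: for
closed φ ∈ SHML, p ∈ ⟦φ⟧ iff no trace is violating for p w.r.t. φ. -/
theorem sat_iff_no_violating_trace (Act : Type) (L : LTS Act) (φ : Frm Act)
    (hclosed : φ.Closed) (p : L.S) :
    p ∈ Sem L φ ↔ ∀ t : List Act, ¬ Viol L p t φ := by
  constructor
  · intro hp t hv
    exact viol_not_sem L hv hclosed hp
  · intro hNV
    have hkey := no_viol_sem L φ (fun _ => .ff) ?_ p ?_
    · have henv : (fun _ : ℕ => {q : L.S | ∀ t, ¬ Viol L q t Frm.ff}) =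
          fun _ : ℕ => (∅ : Set L.S) := by
        funext Y
        ext q
        simp only [Set.mem_setOf_eq, Set.mem_empty_iff_false, iff_false, not_forall,
          not_not]
        exact ⟨[], Viol.ff q⟩
      rwa [henv] at hkey
    · intro Y hY
      simp only [Frm.Closed] at hclosed
      rw [hclosed] at hY
      exact absurd hY (Set.notMem_empty Y)
    · intro t hv
      exact hNV t (viol_equiv L hv φ (msubst_closed φ hclosed _))

end Enf
end

section
/- Suppression blocking (intermediate claim in the proof of Enforcement Soundness): let φ = ⋀_{i∈I}[η_i]φ_i be a closed SHMLnf formula and suppose φ_j = ff for some j ∈ I. Then for every system p and every action a ∈ ⟦η_j⟧, the instrumented system ⟦φ⟧e[p] affords no weak a-transition (¬∃q, ⟦φ⟧e[p] =a=> q): every such action produced by the system is suppressed into τ by the synthesized monitor, so the modal necessities leading to falsehood are never satisfied by the monitored system. -/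
set_option autoImplicit false

namespace Enf

open scoped Classical

variable {Act : Type}

lemma tstep_conj_char {n : ℕ} {G : Fin n → Set Act} {k : Fin n → Act → Frm Act}
    {l : Option Act × Option Act} {e' : Trn Act}
    (h : TStep (synth (Frm.conj n fun i => Frm.box (G i) (k i))) l e') :
    ∃ (i : Fin n) (b : Act), b ∈ G i ∧ l.1 = some b ∧
      ((k i b = Frm.ff ∧ l.2 = none ∧
          e' = synth (Frm.conj n fun i => Frm.box (G i) (k i))) ∨
       (k i b ≠ Frm.ff ∧ l.2 = some b)) := by
  classical
  rw [show synth (Frm.conj n fun i => Frm.box (G i) (k i))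
      = Trn.fix 0 (.sel n fun i => synth (Frm.box (G i) (k i))) from rfl] at h
  cases h with
  | fix h =>
    simp only [Trn.tsubst] at h
    cases h with
    | sel i h =>
      simp only [synth, Trn.tsubst] at h
      cases h with
      | prf hγ =>
        obtain ⟨b, hb, rfl⟩ := hγ
        refine ⟨i, b, hb, rfl, ?_⟩
        by_cases hkb : k i b = Frm.ff
        · left
          simp [hkb, Trn.tsubst, synth]
        · right
          simp [hkb]

lemma tstep_conj_suppress {n : ℕ} {G : Fin n → Set Act} {k : Fin n → Act → Frm Act}
    {j : Fin n} {a : Act} (ha : a ∈ G j) (hka : k j a = Frm.ff) :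
    TStep (synth (Frm.conj n fun i => Frm.box (G i) (k i))) (some a, none)
      (synth (Frm.conj n fun i => Frm.box (G i) (k i))) := by
  classical
  have hmem : (some a : Option Act) ∈ {γ : Option Act | ∃ b ∈ G j, γ = some b} :=
    ⟨a, ha, rfl⟩
  rw [show synth (Frm.conj n fun i => Frm.box (G i) (k i))
      = Trn.fix 0 (.sel n fun i => synth (Frm.box (G i) (k i))) from rfl]
  refine TStep.fix (TStep.sel j ?_)
  show TStep (Trn.tsubst (synth (Frm.box (G j) (k j))) 0
      (Trn.fix 0 (.sel n fun i => synth (Frm.box (G i) (k i))))) (some a, none)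
      (Trn.fix 0 (.sel n fun i => synth (Frm.box (G i) (k i))))
  rw [show (synth (Frm.box (G j) (k j)) : Trn Act)
      = Trn.prf {γ : Option Act | ∃ b ∈ G j, γ = some b}
          (fun γ => match γ with
            | some b => if k j b = Frm.ff then none else some b
            | none => none)
          (fun γ => match γ with
            | some b => if k j b = Frm.ff then Trn.var 0 else synth (k j b)
            | none => Trn.id) by simp only [synth]]
  simp only [Trn.tsubst]
  have h := TStep.prf (Act := Act)
      (out := fun γ => match γ with
        | some b => if k j b = Frm.ff then none else some b
        | none => none)
      (k := fun γ => Trn.tsubst (match γ with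
        | some b => if k j b = Frm.ff then Trn.var 0 else synth (k j b)
        | none => Trn.id) 0 (Trn.fix 0 (.sel n fun i => synth (Frm.box (G i) (k i)))))
      hmem
  simpa [hka, Trn.tsubst] using h

lemma isnf_conj_disj_aux {n : ℕ} {f : Fin n → Frm Act}
    (hnf : Frm.IsNF (Frm.conj n f))
    {G : Fin n → Set Act} {k : Fin n → Act → Frm Act}
    (hf : f = fun i => Frm.box (G i) (k i)) :
    ∀ i i' : Fin n, i ≠ i' → ∀ b ∈ G i, b ∉ G i' := by
  cases hnf with
  | conj n G' k' hdisj hk =>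
    intro i i' hii b hbi hbi'
    have h1 := congrFun hf i
    have h2 := congrFun hf i'
    simp only [Frm.box.injEq] at h1 h2
    exact hdisj i i' hii b (by rw [h1.1]; exact hbi) (by rw [h2.1]; exact hbi')

lemma isnf_conj_disj {n : ℕ} {G : Fin n → Set Act} {k : Fin n → Act → Frm Act}
    (hnf : Frm.IsNF (Frm.conj n fun i => Frm.box (G i) (k i))) :
    ∀ i i' : Fin n, i ≠ i' → ∀ b ∈ G i, b ∉ G i' :=
  isnf_conj_disj_aux hnf rfl

/-- suppression blocking: let φ = ⋀_{i∈I}[η_i]φ_i be a closed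
SHMLnf formula with φ_j = ff for some j ∈ I. Then for every system p and every
a ∈ ⟦η_j⟧, the instrumented system ⟦φ⟧e[p] affords no weak a-transition. -/
theorem suppression_blocking (Act : Type) (L : LTS Act) (n : ℕ)
    (G : Fin n → Set Act) (k : Fin n → Act → Frm Act)
    (hclosed : Frm.Closed (Frm.conj n fun i => Frm.box (G i) (k i)))
    (hnf : Frm.IsNF (Frm.conj n fun i => Frm.box (G i) (k i)))
    (j : Fin n) (hff : ∀ b ∈ G j, k j b = Frm.ff)
    (a : Act) (ha : a ∈ G j) (p : L.S) :
    ¬ ∃ q, WStep (instLTS L)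
        (synth (Frm.conj n fun i => Frm.box (G i) (k i)), p) a q := by
  classical
  have hdisj := isnf_conj_disj hnf
  set E := synth (Frm.conj n fun i => Frm.box (G i) (k i)) with hE
  rintro ⟨q, p₁, p₂, hts, hstep, -⟩
  have hmon : ∀ r, TauStar (instLTS L) (E, p) r → r.1 = E := by
    intro r hr
    induction hr with
    | refl => rfl
    | tail h1 h2 ih =>
      rename_i b c
      obtain ⟨eb, pb⟩ := b
      obtain rfl : eb = E := ih
      cases h2 with
      | trn htr htst =>
        obtain ⟨i, b', hb', hl1, hcase⟩ := tstep_conj_char htst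
        rcases hcase with ⟨_, _, he⟩ | ⟨_, hl2⟩
        · exact he
        · exact absurd hl2 (by simp)
      | asy _ => rfl
      | ins htst =>
        obtain ⟨i, b', hb', hl1, _⟩ := tstep_conj_char htst
        exact absurd hl1 (by simp)
  have h1 : p₁.1 = E := hmon p₁ hts
  obtain ⟨e₁, s₁⟩ := p₁
  obtain rfl : e₁ = E := h1
  cases hstep with
  | trn htr htst =>
    obtain ⟨i, b', hb', hl1, hcase⟩ := tstep_conj_char htst
    rcases hcase with ⟨_, hl2, _⟩ | ⟨hkne, hl2⟩
    · exact absurd hl2 (by simp)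
    · have hab : a = b' := by simpa using hl2
      subst hab
      by_cases hij : i = j
      · subst hij; exact hkne (hff a hb')
      · exact hdisj i j hij a hb' ha
  | ins htst =>
    obtain ⟨i, b', hb', hl1, _⟩ := tstep_conj_char htst
    exact absurd hl1 (by simp)
  | ter htr hno hins =>
    exact hno none E (tstep_conj_suppress ha (hff a ha))

end Enf
end
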